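/- For every real number x with 0 < x ≤ 1 one has the two-sided bound π/x < π/arctan(x) < π/x + 1; consequently the floors satisfy ⌊π/arctan(x)⌋ − ⌊π/x⌋ ∈ {0, 1}. In particular, for any base b > 1 and integer N ≥ 0 with b^{−N} ≤ 1, the collision count ⌊π/arctan(b^{−N})⌋ of the Galperin billiard differs from ⌊π·b^N⌋ (the integer encoding the first N base-b digits of π) by at most 1. -/

import Mathlib

open Real

private lemma galperin_hasDerivAt (x : ℝ) (hx : 0 ≤ x) :
    HasDerivAt (fun y : ℝ => Real.arctan y - π * y / (π + y))
      (1 / (1 + x ^ 2) - π ^ 2 / (π + x) ^ 2) x := by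
  have hπx : π + x ≠ 0 := by positivity
  have h1 : HasDerivAt (fun y : ℝ => π * y / (π + y))
      ((π * (π + x) - π * x * 1) / (π + x) ^ 2) x := by
    have : HasDerivAt (fun y : ℝ => π * y / (π + y)) ((π * 1 * (π + x) - π * x * 1) / (π + x) ^ 2) x := (((hasDerivAt_id' x).const_mul π)).div
      (((hasDerivAt_id' x).const_add π)) hπx
    convert this using 2 <;> simp [id] <;> ring
  have h2 : (π * (π + x) - π * x * 1) / (π + x) ^ 2 = π ^ 2 / (π + x) ^ 2 := by
    ring_nf
  rw [h2] at h1
  exact (Real.hasDerivAt_arctan x).sub h1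

private lemma galperin_key {x : ℝ} (hx : 0 < x) (hx1 : x ≤ 1) :
    π * x / (π + x) < Real.arctan x := by
  have hπ := Real.pi_gt_d6
  set c : ℝ := 2 * π / (π ^ 2 - 1) with hc
  have hden : (0:ℝ) < π ^ 2 - 1 := by nlinarith
  have hc0 : 0 < c := by positivity
  have hc1 : c < 1 := by
    rw [hc, div_lt_one hden]; nlinarith
  set h : ℝ → ℝ := fun y => Real.arctan y - π * y / (π + y) with hh
  have hcont : ∀ s : Set ℝ, s ⊆ Set.Ici 0 → ContinuousOn h s := by
    intro s hs
    intro y hy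
    exact ((galperin_hasDerivAt y (hs hy)).continuousAt).continuousWithinAt
  have hderiv : ∀ y : ℝ, 0 ≤ y → deriv h y = 1 / (1 + y ^ 2) - π ^ 2 / (π + y) ^ 2 := by
    intro y hy; exact (galperin_hasDerivAt y hy).deriv
  have hmono : StrictMonoOn h (Set.Icc 0 c) := by
    apply strictMonoOn_of_deriv_pos (convex_Icc 0 c)
      (hcont _ (by intro y hy; exact hy.1))
    intro y hy
    rw [interior_Icc] at hy
    rw [hderiv y hy.1.le]
    have hy0 := hy.1
    have hyc := hy.2
    have h1 : (0:ℝ) < 1 + y ^ 2 := by positivity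
    have h2 : (0:ℝ) < (π + y) ^ 2 := by positivity
    rw [sub_pos, div_lt_div_iff₀ h2 h1]
    have : y * (π ^ 2 - 1) < 2 * π := by
      rw [hc, lt_div_iff₀ hden] at hyc; linarith
    nlinarith
  have hanti : StrictAntiOn h (Set.Icc c 1) := by
    apply strictAntiOn_of_deriv_neg (convex_Icc c 1)
      (hcont _ (by intro y hy; exact le_trans hc0.le hy.1))
    intro y hy
    rw [interior_Icc] at hy
    have hy0 : 0 < y := lt_trans hc0 hy.1
    rw [hderiv y hy0.le]
    have h1 : (0:ℝ) < 1 + y ^ 2 := by positivity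
    have h2 : (0:ℝ) < (π + y) ^ 2 := by positivity
    rw [sub_neg, div_lt_div_iff₀ h1 h2]
    have : 2 * π < y * (π ^ 2 - 1) := by
      have := hy.1
      rw [hc, div_lt_iff₀ hden] at this; linarith
    nlinarith
  have h0 : h 0 = 0 := by simp [hh]
  have h1pos : 0 < h 1 := by
    have : Real.arctan 1 = π / 4 := Real.arctan_one
    simp only [hh, this, mul_one]
    rw [sub_pos, div_lt_div_iff₀ (by linarith) (by norm_num)]
    nlinarith
  have hx' : 0 < h x := by
    rcases le_or_gt x c with hxc | hxc
    · have := hmono (Set.mem_Icc.2 ⟨le_refl 0, hc0.le⟩) (Set.mem_Icc.2 ⟨hx.le, hxc⟩) hx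
      rwa [h0] at this
    · rcases eq_or_lt_of_le hx1 with rfl | hx1'
      · exact h1pos
      · have := hanti (Set.mem_Icc.2 ⟨hxc.le, hx1⟩) (Set.mem_Icc.2 ⟨hc1.le, le_refl 1⟩) hx1'
        exact lt_trans h1pos this
  simpa [hh, sub_pos] using hx'

/-- Systematic error of the Galperin billiard method: for `0 < x ≤ 1`,
`π/x < π/arctan x < π/x + 1`, hence `⌊π/arctan x⌋ − ⌊π/x⌋ ∈ {0, 1}`; in
particular, for any base `b > 1` and `N ≥ 0` with `b^{−N} ≤ 1`, the collision
count `⌊π/arctan(b^{−N})⌋` differs from `⌊π·b^N⌋` by at most `1`. -/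
theorem galperin_systematic_error_bound :
    (∀ x : ℝ, 0 < x → x ≤ 1 →
      Real.pi / x < Real.pi / Real.arctan x ∧
      Real.pi / Real.arctan x < Real.pi / x + 1) ∧
    (∀ x : ℝ, 0 < x → x ≤ 1 →
      ⌊Real.pi / Real.arctan x⌋ - ⌊Real.pi / x⌋ = 0 ∨
      ⌊Real.pi / Real.arctan x⌋ - ⌊Real.pi / x⌋ = 1) ∧
    (∀ (b : ℝ) (N : ℕ), 1 < b → b ^ (-(N : ℤ)) ≤ 1 →
      |⌊Real.pi / Real.arctan (b ^ (-(N : ℤ)))⌋ - ⌊Real.pi * b ^ N⌋| ≤ 1) := by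
  have main : ∀ x : ℝ, 0 < x → x ≤ 1 →
      Real.pi / x < Real.pi / Real.arctan x ∧
      Real.pi / Real.arctan x < Real.pi / x + 1 := by
    intro x hx hx1
    have hat : 0 < Real.arctan x := by
      have := Real.arctan_strictMono hx
      rwa [Real.arctan_zero] at this
    have hlt : Real.arctan x < x := by
      have := Real.lt_tan (hat) (Real.arctan_lt_pi_div_two x)
      rwa [Real.tan_arctan] at this
    constructor
    · exact div_lt_div_of_pos_left Real.pi_pos hat hlt
    · have hkey := galperin_key hx hx1
      have hfrac : 0 < π * x / (π + x) := by positivity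
      have := div_lt_div_of_pos_left Real.pi_pos hfrac hkey
      calc π / Real.arctan x < π / (π * x / (π + x)) := this
        _ = π / x + 1 := by field_simp
  refine ⟨main, ?_, ?_⟩
  · intro x hx hx1
    obtain ⟨h1, h2⟩ := main x hx hx1
    have f1 : ⌊π / x⌋ ≤ ⌊π / Real.arctan x⌋ := Int.floor_le_floor h1.le
    have f2 : ⌊π / Real.arctan x⌋ ≤ ⌊π / x⌋ + 1 := by
      have := Int.floor_le_floor h2.le
      rwa [show π / x + 1 = π / x + (1:ℤ) by norm_num, Int.floor_add_intCast] at this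
    omega
  · intro b N hb hle
    have hb0 : (0:ℝ) < b := lt_trans one_pos hb
    have hx : (0:ℝ) < b ^ (-(N : ℤ)) := zpow_pos hb0 _
    obtain ⟨h1, h2⟩ := main _ hx hle
    have heq : π / b ^ (-(N : ℤ)) = π * b ^ N := by
      rw [zpow_neg, zpow_natCast]
      field_simp
    have := (by
      intro x hx hx1
      obtain ⟨h1, h2⟩ := main x hx hx1
      have f1 : ⌊π / x⌋ ≤ ⌊π / Real.arctan x⌋ := Int.floor_le_floor h1.le
      have f2 : ⌊π / Real.arctan x⌋ ≤ ⌊π / x⌋ + 1 := by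
        have := Int.floor_le_floor h2.le
        rwa [show π / x + 1 = π / x + (1:ℤ) by norm_num, Int.floor_add_intCast] at this
      exact ⟨f1, f2⟩ : ∀ x : ℝ, 0 < x → x ≤ 1 →
        ⌊π / x⌋ ≤ ⌊π / Real.arctan x⌋ ∧ ⌊π / Real.arctan x⌋ ≤ ⌊π / x⌋ + 1)
    obtain ⟨g1, g2⟩ := this _ hx hle
    rw [heq] at g1 g2
    rw [abs_le]; omega
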